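/- Let χ₋₄ be the nontrivial Dirichlet character modulo 4. For every positive integer n, Σ_{d² ∣ n} μ(d) Σ_{m ∣ n/d²} χ₋₄(n/(m d²)) m² = (1 − [4∣n]/16) · n² · Π_{p ∣ n prime} (1 + χ₋₄(p)/p²). -/
import Mathlib


/-- The nontrivial Dirichlet character modulo 4, as a function on ℕ. -/
def chiFour (m : ℕ) : ℤ :=
  if m % 4 = 1 then 1 else if m % 4 = 3 then -1 else 0

section Aux

set_option linter.unusedVariables false
set_option linter.unnecessarySeqFocus false

lemma chiFour_mul (m n : ℕ) : chiFour (m * n) = chiFour m * chiFour n := by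
  unfold chiFour
  have h : (m * n) % 4 = (m % 4) * (n % 4) % 4 := Nat.mul_mod m n 4
  have hm : m % 4 < 4 := Nat.mod_lt _ (by norm_num)
  have hn : n % 4 < 4 := Nat.mod_lt _ (by norm_num)
  interval_cases hm' : m % 4 <;> interval_cases hn' : n % 4 <;> simp_all

lemma chiFour_two_pow (j : ℕ) (hj : 1 ≤ j) : chiFour (2 ^ j) = 0 := by
  unfold chiFour
  have : 2 ^ j % 4 = 0 ∨ 2 ^ j % 4 = 2 := by
    rcases Nat.lt_or_ge j 2 with h | h
    · interval_cases j <;> simp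
    · left
      have : (4 : ℕ) ∣ 2 ^ j := by
        calc (4:ℕ) = 2 ^ 2 := rfl
        _ ∣ 2 ^ j := pow_dvd_pow 2 h
      omega
  rcases this with h | h <;> simp [h]

lemma chiFour_one' : chiFour 1 = 1 := rfl

lemma chiFour_sq_odd (p : ℕ) (hp : p % 2 = 1) : chiFour p * chiFour p = 1 := by
  unfold chiFour
  have : p % 4 = 1 ∨ p % 4 = 3 := by omega
  rcases this with h | h <;> simp [h]

open ArithmeticFunction Finset

noncomputable def chiF : ArithmeticFunction ℝ := ⟨fun n => (chiFour n : ℝ), by simp [chiFour]⟩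
noncomputable def sqF : ArithmeticFunction ℝ := ⟨fun n => (n : ℝ) ^ 2, by simp⟩
noncomputable def sqmuF : ArithmeticFunction ℝ :=
  ⟨fun n => if Nat.sqrt n * Nat.sqrt n = n then (ArithmeticFunction.moebius (Nat.sqrt n) : ℝ) else 0,
   by simp⟩
noncomputable def GF : ArithmeticFunction ℝ := chiF * sqF
noncomputable def FF : ArithmeticFunction ℝ := sqmuF * GF

lemma sqmuF_eq_zero (a : ℕ) (h : ¬ Nat.sqrt a * Nat.sqrt a = a) : sqmuF a = 0 := by
  simp [sqmuF, h]

lemma GF_apply (k : ℕ) :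
    GF k = ∑ m ∈ k.divisors, (chiFour (k / m) : ℝ) * (m : ℝ) ^ 2 := by
  rw [GF, ArithmeticFunction.mul_apply,
    ← Nat.sum_divisorsAntidiagonal' (f := fun a b => (chiFour a : ℝ) * (b : ℝ) ^ 2)]
  rfl

lemma FF_apply (n : ℕ) (hn : 0 < n) :
    FF n = ∑ d ∈ n.divisors.filter (fun d => d ^ 2 ∣ n),
        (ArithmeticFunction.moebius d : ℝ) *
          ∑ m ∈ (n / d ^ 2).divisors, (chiFour (n / (m * d ^ 2)) : ℝ) * (m : ℝ) ^ 2 := by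
  rw [FF, ArithmeticFunction.mul_apply,
    Nat.sum_divisorsAntidiagonal (f := fun a b => sqmuF a * GF b)]
  rw [← Finset.sum_subset (Finset.filter_subset
      (fun a => Nat.sqrt a * Nat.sqrt a = a) n.divisors)
      (fun a ha hna => by
        rw [sqmuF_eq_zero a fun hc => hna (Finset.mem_filter.mpr ⟨ha, hc⟩), zero_mul])]
  refine Finset.sum_nbij' (i := fun a => Nat.sqrt a) (j := fun d => d ^ 2) ?_ ?_ ?_ ?_ ?_
  · intro a ha
    simp only [Finset.mem_filter, Nat.mem_divisors] at ha ⊢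
    obtain ⟨⟨han, h0⟩, hsq⟩ := ha
    constructor
    · exact ⟨dvd_trans (Dvd.intro _ hsq) han, h0⟩
    · rw [sq, hsq]; exact han
  · intro d hd
    simp only [Finset.mem_filter, Nat.mem_divisors] at hd ⊢
    obtain ⟨⟨hdn, h0⟩, hsq⟩ := hd
    refine ⟨⟨hsq, h0⟩, ?_⟩
    rw [Nat.sqrt_eq' d, ← sq]
  · intro a ha
    simp only [Finset.mem_filter] at ha
    show Nat.sqrt a ^ 2 = a
    rw [sq, ha.2]
  · intro d hd
    exact Nat.sqrt_eq' d
  · intro a ha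
    simp only [Finset.mem_filter, Nat.mem_divisors] at ha
    obtain ⟨⟨han, h0⟩, hsq⟩ := ha
    have hsq2 : Nat.sqrt a ^ 2 = a := by rw [sq, hsq]
    have h1 : sqmuF a = (ArithmeticFunction.moebius (Nat.sqrt a) : ℝ) := by
      simp [sqmuF, hsq]
    show sqmuF a * GF (n / a) = _
    rw [h1, hsq2, GF_apply]
    congr 1
    refine Finset.sum_congr rfl fun m hm => ?_
    rw [Nat.div_div_eq_div_mul, mul_comm a m, mul_comm]

lemma chiF_mult : chiF.IsMultiplicative := by
  constructor
  · show ((chiFour 1 : ℤ) : ℝ) = 1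
    norm_num [chiFour]
  · intro m n _
    show ((chiFour (m * n) : ℤ) : ℝ) = _
    rw [chiFour_mul]; push_cast; rfl

lemma sqF_mult : sqF.IsMultiplicative := by
  constructor
  · show ((1 : ℕ) : ℝ) ^ 2 = 1
    norm_num
  · intro m n _
    show ((m * n : ℕ) : ℝ) ^ 2 = (m : ℝ) ^ 2 * (n : ℝ) ^ 2
    push_cast; ring

lemma sqmuF_mult : sqmuF.IsMultiplicative := by
  constructor
  · show (if Nat.sqrt 1 * Nat.sqrt 1 = 1 then (ArithmeticFunction.moebius (Nat.sqrt 1) : ℝ) else 0) = 1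
    norm_num
  · intro m n hc
    show (if Nat.sqrt (m * n) * Nat.sqrt (m * n) = m * n then
        (ArithmeticFunction.moebius (Nat.sqrt (m * n)) : ℝ) else 0) =
      (if Nat.sqrt m * Nat.sqrt m = m then (ArithmeticFunction.moebius (Nat.sqrt m) : ℝ) else 0) *
      (if Nat.sqrt n * Nat.sqrt n = n then (ArithmeticFunction.moebius (Nat.sqrt n) : ℝ) else 0)
    by_cases hm : Nat.sqrt m * Nat.sqrt m = m
    · by_cases hn : Nat.sqrt n * Nat.sqrt n = n
      · have key : Nat.sqrt (m * n) = Nat.sqrt m * Nat.sqrt n := by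
          have : (Nat.sqrt m * Nat.sqrt n) * (Nat.sqrt m * Nat.sqrt n) = m * n := by
            rw [mul_mul_mul_comm, hm, hn]
          rw [← this, Nat.sqrt_eq]
        have hmn : Nat.sqrt (m * n) * Nat.sqrt (m * n) = m * n := by
          rw [key, mul_mul_mul_comm, hm, hn]
        rw [if_pos hmn, if_pos hm, if_pos hn, key]
        have hcop : (Nat.sqrt m).Coprime (Nat.sqrt n) :=
          Nat.Coprime.coprime_dvd_left (Dvd.intro _ hm)
            (Nat.Coprime.coprime_dvd_right (Dvd.intro _ hn) hc)
        rw [ArithmeticFunction.isMultiplicative_moebius.map_mul_of_coprime hcop]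
        push_cast; rfl
      · rw [if_neg hn, mul_zero, if_neg]
        intro hmn
        apply hn
        rw [← Nat.exists_mul_self]
        have : m * n = Nat.sqrt (m * n) ^ 2 := by rw [sq, hmn]
        obtain ⟨d, hd⟩ := exists_eq_pow_of_mul_eq_pow (a := n) (b := m)
          (by rw [gcd_eq_nat_gcd, Nat.Coprime.gcd_eq_one hc.symm]; exact isUnit_one)
          (k := 2) (by rw [mul_comm, this])
        exact ⟨d, by rw [hd, sq]⟩
    · rw [if_neg hm, zero_mul, if_neg]
      intro hmn
      apply hm
      rw [← Nat.exists_mul_self]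
      have : m * n = Nat.sqrt (m * n) ^ 2 := by rw [sq, hmn]
      obtain ⟨d, hd⟩ := exists_eq_pow_of_mul_eq_pow (a := m) (b := n)
        (by rw [gcd_eq_nat_gcd, Nat.Coprime.gcd_eq_one hc]; exact isUnit_one)
        (k := 2) this
      exact ⟨d, by rw [hd, sq]⟩

lemma FF_mult : FF.IsMultiplicative :=
  sqmuF_mult.mul (chiF_mult.mul sqF_mult)

noncomputable def RF : ArithmeticFunction ℝ :=
  ⟨fun n => (1 - (if 4 ∣ n then 1 else 0) / 16) * (n : ℝ) ^ 2 *
      ∏ p ∈ n.primeFactors, (1 + (chiFour p : ℝ) / (p : ℝ) ^ 2), by simp⟩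

lemma four_factor_mul {m n : ℕ} (hc : m.Coprime n) (hm : m ≠ 0) (hn : n ≠ 0) :
    (1 - (if 4 ∣ m * n then 1 else 0) / 16 : ℝ) =
      (1 - (if 4 ∣ m then 1 else 0) / 16) * (1 - (if 4 ∣ n then 1 else 0) / 16) := by
  have hnot : ¬ (2 ∣ m ∧ 2 ∣ n) := by
    rintro ⟨h1, h2⟩
    have := Nat.dvd_gcd h1 h2
    rw [hc] at this
    omega
  by_cases h4m : 4 ∣ m
  · have h4n : ¬ 4 ∣ n := fun h => hnot ⟨dvd_trans (by norm_num) h4m, dvd_trans (by norm_num) h⟩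
    rw [if_pos (Dvd.dvd.mul_right h4m n), if_pos h4m, if_neg h4n]; ring
  · by_cases h4n : 4 ∣ n
    · rw [if_pos (Dvd.dvd.mul_left h4n m), if_neg h4m, if_pos h4n]; ring
    · have : ¬ 4 ∣ m * n := by
        intro h
        by_cases h2m : 2 ∣ m
        · have hodd : ¬ 2 ∣ n := fun h2n => hnot ⟨h2m, h2n⟩
          have hcop : Nat.Coprime 4 n := by
            have : Nat.Coprime 2 n := (Nat.Prime.coprime_iff_not_dvd Nat.prime_two).mpr hodd
            simpa using Nat.Coprime.pow_left 2 this
          exact h4m (hcop.dvd_of_dvd_mul_right h)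
        · have hcop : Nat.Coprime 4 m := by
            have : Nat.Coprime 2 m := (Nat.Prime.coprime_iff_not_dvd Nat.prime_two).mpr h2m
            simpa using Nat.Coprime.pow_left 2 this
          exact h4n (hcop.dvd_of_dvd_mul_right (by rwa [mul_comm] at h))
      rw [if_neg this, if_neg h4m, if_neg h4n]; ring

lemma RF_mult : RF.IsMultiplicative := by
  constructor
  · show (1 - (if 4 ∣ 1 then 1 else 0) / 16 : ℝ) * ((1 : ℕ) : ℝ) ^ 2 *
      ∏ p ∈ (1 : ℕ).primeFactors, (1 + (chiFour p : ℝ) / (p : ℝ) ^ 2) = 1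
    norm_num
  · intro m n hc
    rcases eq_or_ne m 0 with rfl | hm
    · have : n = 1 := by simpa using hc
      subst this; simp
    rcases eq_or_ne n 0 with rfl | hn
    · have : m = 1 := by simpa using hc
      subst this; simp
    show (1 - (if 4 ∣ m * n then 1 else 0) / 16 : ℝ) * ((m * n : ℕ) : ℝ) ^ 2 *
        ∏ p ∈ (m * n).primeFactors, (1 + (chiFour p : ℝ) / (p : ℝ) ^ 2) = _
    rw [four_factor_mul hc hm hn, Nat.primeFactors_mul hm hn,
      Finset.prod_union (Nat.Coprime.disjoint_primeFactors hc)]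
    push_cast
    show _ = (1 - (if 4 ∣ m then 1 else 0) / 16 : ℝ) * (m : ℝ) ^ 2 * (∏ p ∈ m.primeFactors, _) *
      ((1 - (if 4 ∣ n then 1 else 0) / 16 : ℝ) * (n : ℝ) ^ 2 * (∏ p ∈ n.primeFactors, _))
    ring

lemma sqmuF_prime_pow {p : ℕ} (hp : p.Prime) (j : ℕ) :
    sqmuF (p ^ j) = if j = 0 then 1 else if j = 2 then -1 else 0 := by
  rcases Nat.even_or_odd j with ⟨e, he⟩ | ⟨e, he⟩
  · subst he
    have h1 : p ^ (e + e) = (p ^ e) ^ 2 := by ring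
    have h2 : Nat.sqrt ((p ^ e) ^ 2) = p ^ e := Nat.sqrt_eq' _
    have h3 : sqmuF (p ^ (e + e)) = (ArithmeticFunction.moebius (p ^ e) : ℝ) := by
      show (if _ then _ else _) = _
      rw [h1, h2, if_pos (by rw [← sq])]
    rw [h3]
    match e with
    | 0 => simp
    | 1 => rw [pow_one, moebius_apply_prime hp]; norm_num
    | (e+2) =>
      rw [moebius_apply_prime_pow hp (by omega),
        if_neg (show ¬ (e+2) = 1 by omega), if_neg (show ¬ (e+2)+(e+2) = 0 by omega),
        if_neg (show ¬ (e+2)+(e+2) = 2 by omega)]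
      norm_num
  · subst he
    have hns : ¬ Nat.sqrt (p ^ (2 * e + 1)) * Nat.sqrt (p ^ (2 * e + 1)) = p ^ (2 * e + 1) := by
      intro h
      have hs : Nat.sqrt (p ^ (2 * e + 1)) ∣ p ^ (2 * e + 1) := Dvd.intro _ h
      obtain ⟨i, hi, hieq⟩ := (Nat.dvd_prime_pow hp).mp hs
      rw [hieq, ← pow_add] at h
      have := Nat.pow_right_injective hp.two_le h
      omega
    show (if _ then _ else _) = _
    rw [if_neg hns, if_neg (by omega), if_neg (by omega)]

lemma FF_prime_pow {p : ℕ} (hp : p.Prime) (k : ℕ) :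
    FF (p ^ k) = GF (p ^ k) + (if 2 ∈ Finset.range (k + 1) then -GF (p ^ (k - 2)) else 0) := by
  rw [FF, ArithmeticFunction.mul_apply,
    Nat.sum_divisorsAntidiagonal (f := fun a b => sqmuF a * GF b),
    Nat.sum_divisors_prime_pow hp]
  have step : ∀ i ∈ Finset.range (k + 1),
      sqmuF (p ^ i) * GF (p ^ k / p ^ i) =
        (if i = 0 then GF (p ^ k) else 0) + (if i = 2 then -GF (p ^ (k - 2)) else 0) := by
    intro i hi
    simp only [Finset.mem_range] at hi
    have hdiv : p ^ k / p ^ i = p ^ (k - i) := Nat.pow_div (by omega) hp.pos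
    rw [hdiv, sqmuF_prime_pow hp]
    rcases eq_or_ne i 0 with rfl | h0
    · norm_num
    rcases eq_or_ne i 2 with rfl | h2
    · rw [if_neg h0, if_pos rfl, if_pos rfl, if_neg (by omega)]; ring
    · rw [if_neg h0, if_neg h2, if_neg h0, if_neg h2]; ring
  rw [Finset.sum_congr rfl step, Finset.sum_add_distrib,
    Finset.sum_ite_eq' (Finset.range (k + 1)) 0 (fun _ => GF (p ^ k)),
    Finset.sum_ite_eq' (Finset.range (k + 1)) 2 (fun _ => -GF (p ^ (k - 2))),
    if_pos (by simp)]

lemma GF_prime_pow {p : ℕ} (hp : p.Prime) (k : ℕ) :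
    GF (p ^ k) = ∑ i ∈ Finset.range (k + 1), (chiFour (p ^ (k - i)) : ℝ) * ((p : ℝ) ^ i) ^ 2 := by
  rw [GF_apply, Nat.sum_divisors_prime_pow hp]
  refine Finset.sum_congr rfl fun i hi => ?_
  simp only [Finset.mem_range] at hi
  rw [Nat.pow_div (by omega) hp.pos]
  push_cast
  ring

lemma GF_two_pow (k : ℕ) : GF (2 ^ k) = ((2 : ℝ) ^ k) ^ 2 := by
  rw [GF_prime_pow Nat.prime_two]
  push_cast
  have step : ∀ i ∈ Finset.range (k + 1),
      (chiFour (2 ^ (k - i)) : ℝ) * ((2 : ℝ) ^ i) ^ 2 =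
        if i = k then ((2 : ℝ) ^ k) ^ 2 else 0 := by
    intro i hi
    simp only [Finset.mem_range] at hi
    rcases eq_or_ne i k with rfl | h
    · rw [Nat.sub_self, if_pos rfl]
      norm_num [chiFour]
    · rw [chiFour_two_pow (k - i) (by omega), if_neg h]
      norm_num
  rw [Finset.sum_congr rfl step,
    Finset.sum_ite_eq' (Finset.range (k + 1)) k (fun _ => ((2 : ℝ) ^ k) ^ 2),
    if_pos (by simp)]

lemma GF_odd_step {p : ℕ} (hp : p.Prime) (hodd : p % 2 = 1) (k : ℕ) :
    GF (p ^ (k + 2)) = ((p : ℝ) ^ 2) ^ (k + 2) + (chiFour p : ℝ) * ((p : ℝ) ^ 2) ^ (k + 1)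
      + GF (p ^ k) := by
  rw [GF_prime_pow hp (k + 2), GF_prime_pow hp k]
  rw [Finset.sum_range_succ, Finset.sum_range_succ (n := k + 1)]
  have h1 : ∀ i ∈ Finset.range (k + 1),
      (chiFour (p ^ (k + 2 - i)) : ℝ) * ((p : ℝ) ^ i) ^ 2 =
        (chiFour (p ^ (k - i)) : ℝ) * ((p : ℝ) ^ i) ^ 2 := by
    intro i hi
    simp only [Finset.mem_range] at hi
    have he : k + 2 - i = (k - i) + 2 := by omega
    rw [he, pow_add, chiFour_mul, pow_two, chiFour_mul, chiFour_sq_odd p hodd, mul_one]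
  rw [Finset.sum_congr rfl h1]
  have e1 : k + 2 - (k + 1) = 1 := by omega
  have e2 : k + 2 - (k + 2) = 0 := by omega
  rw [e1, e2, pow_one, pow_zero]
  have hχ1 : chiFour 1 = 1 := rfl
  rw [hχ1]
  push_cast
  ring

lemma FF_eq_RF : FF = RF := by
  rw [ArithmeticFunction.IsMultiplicative.eq_iff_eq_on_prime_powers FF FF_mult RF RF_mult]
  intro p k hp
  have hRF : RF (p ^ k) = (1 - (if 4 ∣ p ^ k then 1 else 0) / 16) * ((p ^ k : ℕ) : ℝ) ^ 2 *
      ∏ q ∈ (p ^ k).primeFactors, (1 + (chiFour q : ℝ) / (q : ℝ) ^ 2) := rfl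
  rcases eq_or_ne k 0 with rfl | hk
  · rw [pow_zero, FF_mult.map_one, RF_mult.map_one]
  have hpf : (p ^ k).primeFactors = {p} := Nat.primeFactors_prime_pow hk hp
  rw [hRF, hpf, Finset.prod_singleton]
  rcases eq_or_ne p 2 with rfl | hp2
  · -- p = 2
    have hχ2 : (chiFour 2 : ℝ) = 0 := by norm_num [chiFour]
    rw [FF_prime_pow hp, GF_two_pow, hχ2]
    rcases eq_or_ne k 1 with rfl | hk1
    · norm_num
    · have hk2 : 2 ≤ k := by omega
      have h4 : (4 : ℕ) ∣ 2 ^ k := by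
        calc (4:ℕ) = 2 ^ 2 := rfl
        _ ∣ 2 ^ k := pow_dvd_pow 2 hk2
      rw [if_pos (Finset.mem_range.mpr (by omega)), if_pos h4, GF_two_pow]
      have hsplit : (2 : ℝ) ^ (k - 2) * 4 = (2 : ℝ) ^ k := by
        rw [show (4 : ℝ) = 2 ^ 2 by norm_num, ← pow_add, Nat.sub_add_cancel hk2]
      push_cast
      rw [← hsplit]
      ring
  · -- p odd
    have hodd : p % 2 = 1 := Nat.odd_iff.mp (hp.odd_of_ne_two hp2)
    have h4 : ¬ (4 : ℕ) ∣ p ^ k := by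
      intro h
      have h2 : (2 : ℕ) ∣ p ^ k := dvd_trans (by norm_num) h
      have := Nat.Prime.dvd_of_dvd_pow (p := 2) Nat.prime_two h2
      omega
    have key : FF (p ^ k) = ((p : ℝ) ^ 2) ^ k + (chiFour p : ℝ) * ((p : ℝ) ^ 2) ^ (k - 1) := by
      match k, hk with
      | 1, _ =>
        rw [FF_prime_pow hp, if_neg (by simp), GF_prime_pow hp]
        rw [Finset.sum_range_succ, Finset.sum_range_succ, Finset.sum_range_zero]
        norm_num [chiFour_one']
        ring
      | (k+2), _ =>
        rw [FF_prime_pow hp, if_pos (Finset.mem_range.mpr (by omega)),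
          GF_odd_step hp hodd, Nat.add_sub_cancel]
        have : k + 2 - 1 = k + 1 := by omega
        rw [this]
        ring
    have hqk : ((p : ℝ) ^ 2) ^ k = ((p : ℝ) ^ 2) ^ (k - 1) * (p : ℝ) ^ 2 := by
      conv_lhs => rw [show k = (k - 1) + 1 by omega]
      rw [pow_succ]
    have hp0 : (p : ℝ) ≠ 0 := Nat.cast_ne_zero.mpr hp.pos.ne'
    rw [key, if_neg h4, Nat.cast_pow]
    have h1 : ((p : ℝ) ^ k) ^ 2 = ((p : ℝ) ^ 2) ^ k := by ring
    rw [h1, hqk]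
    field_simp
    ring

end Aux

theorem stmt_10 (n : ℕ) (hn : 0 < n) :
    ∑ d ∈ n.divisors.filter (fun d => d ^ 2 ∣ n),
        (ArithmeticFunction.moebius d : ℝ) *
          ∑ m ∈ (n / d ^ 2).divisors, (chiFour (n / (m * d ^ 2)) : ℝ) * (m : ℝ) ^ 2 =
      (1 - (if 4 ∣ n then 1 else 0) / 16) * (n : ℝ) ^ 2 *
        ∏ p ∈ n.primeFactors, (1 + (chiFour p : ℝ) / (p : ℝ) ^ 2) := by
  rw [← FF_apply n hn, FF_eq_RF]
  rfl
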